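/- Let X be a parafinite simplicial set with simplicial Hilbert space H. The projectors Π_{n,i} = S_{n−1,i} S_{n−1,i}† (0 ≤ i ≤ n−1) on H_n commute pairwise, and the orthogonal projector Π_n onto the degenerate subspace ˢH_n = Σ_{i} ran S_{n−1,i} is given by Π_n = 1_n − Π_{i=0}^{n−1}(1_n − Π_{n,i}). -/

import Mathlib

set_option linter.unusedSectionVars false

structure SimplicialSet where
  X : ℕ → Type
  d : (n : ℕ) → ℕ → X (n+1) → X n
  s : (n : ℕ) → ℕ → X n → X (n+1)
  dd : ∀ (n i j : ℕ), i < j → j ≤ n+2 → ∀ x : X (n+2),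
    d n i (d (n+1) j x) = d n (j-1) (d (n+1) i x)
  ds_lt : ∀ (n i j : ℕ), i < j → j ≤ n+1 → ∀ x : X (n+1),
    d (n+1) i (s (n+1) j x) = s n (j-1) (d n i x)
  ds_eq : ∀ (n j : ℕ), j ≤ n → ∀ x : X n, d n j (s n j x) = x
  ds_eq' : ∀ (n j : ℕ), j ≤ n → ∀ x : X n, d n (j+1) (s n j x) = x
  ds_gt : ∀ (n i j : ℕ), j+1 < i → i ≤ n+2 → ∀ x : X (n+1),
    d (n+1) i (s (n+1) j x) = s n j (d n (i-1) x)
  ss : ∀ (n i j : ℕ), i ≤ j → j ≤ n → ∀ x : X n,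
    s (n+1) i (s n j x) = s (n+1) (j+1) (s n i x)

noncomputable def Sop (G : SimplicialSet) [∀ n, Fintype (G.X n)]
    [∀ n, DecidableEq (G.X n)] (n i : ℕ) :
    EuclideanSpace ℂ (G.X n) →ₗ[ℂ] EuclideanSpace ℂ (G.X (n+1)) :=
  (PiLp.basisFun 2 ℂ (G.X n)).constr ℂ fun σ => EuclideanSpace.single (G.s n i σ) 1

variable (G : SimplicialSet) [∀ n, Fintype (G.X n)] [∀ n, DecidableEq (G.X n)]

lemma s_inj {n i : ℕ} (hi : i ≤ n) : Function.Injective (G.s n i) := by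
  intro a b h
  have := G.ds_eq n i hi a
  rw [h, G.ds_eq n i hi b] at this
  exact this.symm

lemma basisFun_eq_single (n : ℕ) (σ : G.X n) :
    (PiLp.basisFun 2 ℂ (G.X n)) σ = EuclideanSpace.single σ 1 := by
  rw [PiLp.basisFun_apply]

lemma Sop_single (n i : ℕ) (σ : G.X n) :
    Sop G n i (EuclideanSpace.single σ 1) = EuclideanSpace.single (G.s n i σ) 1 := by
  rw [← basisFun_eq_single, Sop, Module.Basis.constr_basis]

lemma adjoint_Sop_apply (n i : ℕ) (x : EuclideanSpace ℂ (G.X (n+1))) (σ : G.X n) :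
    LinearMap.adjoint (Sop G n i) x σ = x (G.s n i σ) := by
  have h := LinearMap.adjoint_inner_right (Sop G n i) (EuclideanSpace.single σ (1:ℂ)) x
  rw [Sop_single] at h
  simpa [EuclideanSpace.inner_single_left] using h

lemma Sop_isom (n i : ℕ) (hi : i ≤ n) :
    LinearMap.adjoint (Sop G n i) ∘ₗ Sop G n i = LinearMap.id := by
  apply Module.Basis.ext (PiLp.basisFun 2 ℂ (G.X n))
  intro σ
  rw [basisFun_eq_single, LinearMap.comp_apply, Sop_single, LinearMap.id_apply]
  ext ρ
  rw [adjoint_Sop_apply, EuclideanSpace.single_apply, EuclideanSpace.single_apply]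
  exact if_congr ⟨fun h => s_inj G hi h, fun h => by rw [h]⟩ rfl rfl

lemma Sop_ss (m i j : ℕ) (hij : i ≤ j) (hj : j ≤ m) :
    Sop G (m+1) i ∘ₗ Sop G m j = Sop G (m+1) (j+1) ∘ₗ Sop G m i := by
  apply Module.Basis.ext (PiLp.basisFun 2 ℂ (G.X m))
  intro σ
  rw [basisFun_eq_single, LinearMap.comp_apply, LinearMap.comp_apply,
    Sop_single, Sop_single, Sop_single, Sop_single, G.ss m i j hij hj σ]

lemma exchange (m i j : ℕ) (hij : i ≤ j) (hj : j + 1 ≤ m+1) :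
    LinearMap.adjoint (Sop G (m+1) i) ∘ₗ Sop G (m+1) (j+1)
      = Sop G m j ∘ₗ LinearMap.adjoint (Sop G m i) := by
  have hi : i ≤ m := le_trans hij (Nat.le_of_succ_le_succ hj)
  apply Module.Basis.ext (PiLp.basisFun 2 ℂ (G.X (m+1)))
  intro σ
  rw [basisFun_eq_single, LinearMap.comp_apply, LinearMap.comp_apply, Sop_single]
  by_cases h : ∃ μ, G.s m i μ = σ
  · obtain ⟨μ, hμ⟩ := h
    have hy : LinearMap.adjoint (Sop G m i) (EuclideanSpace.single σ 1)
        = EuclideanSpace.single μ 1 := by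
      ext ν
      rw [adjoint_Sop_apply, EuclideanSpace.single_apply, EuclideanSpace.single_apply]
      refine if_congr ⟨fun hc => s_inj G hi (hc.trans hμ.symm), fun hc => by rw [hc, hμ]⟩ rfl rfl
    rw [hy, Sop_single]
    ext ρ
    rw [adjoint_Sop_apply, EuclideanSpace.single_apply, EuclideanSpace.single_apply]
    refine if_congr ⟨fun hc => ?_, fun hc => ?_⟩ rfl rfl
    · -- s_{m+1,i} ρ = s_{m+1,j+1} σ  →  ρ = s_{m,j} μ
      have h1 : G.d (m+1) i (G.s (m+1) i ρ) = ρ := G.ds_eq (m+1) i (le_trans hi (Nat.le_succ m)) ρ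
      have h2 : G.d (m+1) i (G.s (m+1) (j+1) σ) = G.s m j (G.d m i σ) := by
        have := G.ds_lt m i (j+1) (Nat.lt_succ_of_le hij) hj σ
        simpa using this
      have h3 : G.d m i σ = μ := by rw [← hμ, G.ds_eq m i hi μ]
      rw [← h1, hc, h2, h3]
    · rw [hc, ← hμ, ← G.ss m i j hij (Nat.le_of_succ_le_succ hj) μ]
  · have hy : LinearMap.adjoint (Sop G m i) (EuclideanSpace.single σ 1) = 0 := by
      ext ν
      rw [adjoint_Sop_apply, EuclideanSpace.single_apply]
      rw [if_neg (fun hc => h ⟨ν, hc⟩)]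
      rfl
    rw [hy, map_zero]
    ext ρ
    rw [adjoint_Sop_apply, EuclideanSpace.single_apply]
    rw [if_neg fun hc => ?_]
    · rfl
    · -- from s_{m+1,i} ρ = s_{m+1,j+1} σ build a preimage
      apply h
      refine ⟨G.d m i σ, ?_⟩
      have hjm : j ≤ m := Nat.le_of_succ_le_succ hj
      have h1 : ρ = G.s m j (G.d m i σ) := by
        have e1 : G.d (m+1) i (G.s (m+1) i ρ) = ρ := G.ds_eq (m+1) i (le_trans hi (Nat.le_succ m)) ρ
        have e2 : G.d (m+1) i (G.s (m+1) (j+1) σ) = G.s m j (G.d m i σ) := by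
          have := G.ds_lt m i (j+1) (Nat.lt_succ_of_le hij) hj σ
          simpa using this
        rw [← e1, hc, e2]
      have h2 : σ = G.d (m+1) (j+1) (G.s (m+1) i ρ) := by
        rw [hc, G.ds_eq (m+1) (j+1) hj σ]
      rw [h2, h1, G.ss m i j hij hjm, G.ds_eq (m+1) (j+1) hj, G.ds_eq m i hi]

noncomputable def Pio (G : SimplicialSet) [∀ n, Fintype (G.X n)]
    [∀ n, DecidableEq (G.X n)] (n i : ℕ) :
    Module.End ℂ (EuclideanSpace ℂ (G.X (n+1))) :=
  Sop G n i ∘ₗ LinearMap.adjoint (Sop G n i)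

lemma Pio_adjoint (n i : ℕ) : LinearMap.adjoint (Pio G n i) = Pio G n i := by
  rw [Pio, LinearMap.adjoint_comp, LinearMap.adjoint_adjoint]

lemma Pio_mul_of_lt (m i j : ℕ) (hij : i ≤ j) (hj : j + 1 ≤ m + 1) :
    Pio G (m+1) i * Pio G (m+1) (j+1)
      = (Sop G (m+1) (j+1) ∘ₗ Sop G m i) ∘ₗ
        LinearMap.adjoint (Sop G (m+1) (j+1) ∘ₗ Sop G m i) := by
  have hi : i ≤ m := le_trans hij (Nat.le_of_succ_le_succ hj)
  show (Sop G (m+1) i ∘ₗ LinearMap.adjoint (Sop G (m+1) i)) ∘ₗ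
      (Sop G (m+1) (j+1) ∘ₗ LinearMap.adjoint (Sop G (m+1) (j+1))) = _
  rw [LinearMap.adjoint_comp]
  calc (Sop G (m+1) i ∘ₗ LinearMap.adjoint (Sop G (m+1) i)) ∘ₗ
      (Sop G (m+1) (j+1) ∘ₗ LinearMap.adjoint (Sop G (m+1) (j+1)))
      = Sop G (m+1) i ∘ₗ (LinearMap.adjoint (Sop G (m+1) i) ∘ₗ Sop G (m+1) (j+1)) ∘ₗ
          LinearMap.adjoint (Sop G (m+1) (j+1)) := by
        simp only [LinearMap.comp_assoc]
    _ = Sop G (m+1) i ∘ₗ (Sop G m j ∘ₗ LinearMap.adjoint (Sop G m i)) ∘ₗ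
          LinearMap.adjoint (Sop G (m+1) (j+1)) := by rw [exchange G m i j hij hj]
    _ = (Sop G (m+1) i ∘ₗ Sop G m j) ∘ₗ LinearMap.adjoint (Sop G m i) ∘ₗ
          LinearMap.adjoint (Sop G (m+1) (j+1)) := by simp only [LinearMap.comp_assoc]
    _ = (Sop G (m+1) (j+1) ∘ₗ Sop G m i) ∘ₗ LinearMap.adjoint (Sop G m i) ∘ₗ
          LinearMap.adjoint (Sop G (m+1) (j+1)) := by
        rw [Sop_ss G m i j hij (Nat.le_of_succ_le_succ hj)]

lemma Pio_comm (n i j : ℕ) (hi : i ≤ n) (hj : j ≤ n) :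
    Pio G n i * Pio G n j = Pio G n j * Pio G n i := by
  have key : ∀ a b : ℕ, a < b → b ≤ n → Pio G n a * Pio G n b = Pio G n b * Pio G n a := by
    intro a b hab hb
    obtain ⟨b', rfl⟩ : ∃ b', b = b'+1 := ⟨b-1, by omega⟩
    obtain ⟨m, rfl⟩ : ∃ m, n = m+1 := ⟨n-1, by omega⟩
    have hab' : a ≤ b' := by omega
    have h1 := Pio_mul_of_lt G m a b' hab' hb
    have h2 : Pio G (m+1) (b'+1) * Pio G (m+1) a
        = LinearMap.adjoint (Pio G (m+1) a * Pio G (m+1) (b'+1)) := by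
      show _ = LinearMap.adjoint ((Pio G (m+1) a) ∘ₗ (Pio G (m+1) (b'+1)))
      rw [LinearMap.adjoint_comp, Pio_adjoint, Pio_adjoint]; rfl
    rw [h2, h1]; simp [LinearMap.adjoint_comp, LinearMap.adjoint_adjoint, LinearMap.comp_assoc]
  rcases lt_trichotomy i j with h | h | h
  · exact key i j h hj
  · rw [h]
  · exact (key j i h hi).symm

noncomputable def degProj (G : SimplicialSet) [∀ n, Fintype (G.X n)]
    [∀ n, DecidableEq (G.X n)] (n : ℕ) :
    Module.End ℂ (EuclideanSpace ℂ (G.X (n+1))) :=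
  1 - ((List.range (n+1)).map fun i => 1 - Pio G n i).prod

noncomputable def degSpace (G : SimplicialSet) [∀ n, Fintype (G.X n)]
    [∀ n, DecidableEq (G.X n)] (n : ℕ) :
    Submodule ℂ (EuclideanSpace ℂ (G.X (n+1))) :=
  ⨆ i ∈ Finset.range (n+1), LinearMap.range (Sop G n i)

noncomputable def Qop (G : SimplicialSet) [∀ n, Fintype (G.X n)]
    [∀ n, DecidableEq (G.X n)] (n k : ℕ) :
    Module.End ℂ (EuclideanSpace ℂ (G.X (n+1))) :=
  ((List.range k).map fun i => 1 - Pio G n i).prod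

lemma adjoint_one (n : ℕ) :
    LinearMap.adjoint (1 : Module.End ℂ (EuclideanSpace ℂ (G.X (n+1)))) = 1 := by
  symm
  rw [LinearMap.eq_adjoint_iff]
  intro x y
  rfl

variable (n : ℕ)

lemma factor_comm {i j : ℕ} (hi : i ≤ n) (hj : j ≤ n) :
    Commute (1 - Pio G n i) (1 - Pio G n j) :=
  ((Commute.one_left _).sub_left (((Commute.one_right _).sub_right (Pio_comm G n i j hi hj))))

lemma Q_succ (k : ℕ) : Qop G n (k+1) = Qop G n k * (1 - Pio G n k) := by
  rw [Qop, List.range_succ, List.map_append, List.prod_append, Qop]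
  simp

lemma Q_comm {k j : ℕ} (hk : k ≤ n+1) (hj : j ≤ n) :
    Commute (1 - Pio G n j) (Qop G n k) := by
  apply Commute.list_prod_right
  intro x hx
  simp only [List.mem_map, List.mem_range] at hx
  obtain ⟨i, hi, rfl⟩ := hx
  exact factor_comm G n hj (by omega)

lemma sub_Pio_Sop {k : ℕ} (hk : k ≤ n) (y : EuclideanSpace ℂ (G.X n)) :
    (1 - Pio G n k) (Sop G n k y) = 0 := by
  have h := Sop_isom G n k hk
  have hfix : Pio G n k (Sop G n k y) = Sop G n k y := by
    show (Sop G n k ∘ₗ LinearMap.adjoint (Sop G n k)) (Sop G n k y) = _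
    calc (Sop G n k ∘ₗ LinearMap.adjoint (Sop G n k)) (Sop G n k y)
        = Sop G n k ((LinearMap.adjoint (Sop G n k) ∘ₗ Sop G n k) y) := rfl
      _ = Sop G n k y := by rw [h]; rfl
  simp [LinearMap.sub_apply, hfix]

lemma Q_kill : ∀ k, k ≤ n+1 → ∀ j, j < k → ∀ y, Qop G n k (Sop G n j y) = 0 := by
  intro k
  induction k with
  | zero => intro _ j hj; omega
  | succ k ih =>
    intro hk j hj y
    rw [Q_succ]
    rcases Nat.lt_or_ge j k with h | h
    · rw [← (Q_comm G n (show k ≤ n+1 by omega) (show k ≤ n by omega)).eq]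
      show (1 - Pio G n k) (Qop G n k (Sop G n j y)) = 0
      rw [ih (by omega) j h y, map_zero]
    · have hjk : j = k := by omega
      subst hjk
      show Qop G n j ((1 - Pio G n j) (Sop G n j y)) = 0
      rw [sub_Pio_Sop G n (by omega) y, map_zero]

lemma range_le_degSpace {j : ℕ} (hj : j ≤ n) :
    LinearMap.range (Sop G n j) ≤ degSpace G n :=
  le_iSup₂_of_le j (Finset.mem_range.mpr (by omega)) le_rfl

lemma Pio_mem_degSpace {k : ℕ} (hk : k ≤ n) (x : EuclideanSpace ℂ (G.X (n+1))) :
    Pio G n k x ∈ degSpace G n :=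
  range_le_degSpace G n hk ⟨LinearMap.adjoint (Sop G n k) x, rfl⟩

lemma Q_sub_mem : ∀ k, k ≤ n+1 → ∀ x, x - Qop G n k x ∈ degSpace G n := by
  intro k
  induction k with
  | zero => intro _ x; simp [Qop]
  | succ k ih =>
    intro hk x
    rw [Q_succ]
    have hy : x - (Qop G n k * (1 - Pio G n k)) x
        = (((1 - Pio G n k) x) - Qop G n k ((1 - Pio G n k) x)) + Pio G n k x := by
      show x - Qop G n k ((1 - Pio G n k) x) = _
      have h1 : (1 - Pio G n k) x = x - Pio G n k x := rfl
      rw [h1]; abel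
    rw [hy]
    exact Submodule.add_mem _ (ih (by omega) _) (Pio_mem_degSpace G n (by omega) x)

lemma degSpace_le_ker : degSpace G n ≤ LinearMap.ker (Qop G n (n+1)) := by
  apply iSup₂_le
  intro j hj
  rintro _ ⟨y, rfl⟩
  exact LinearMap.mem_ker.mpr (Q_kill G n (n+1) le_rfl j (Finset.mem_range.mp hj) y)

lemma adj_list_prod (L : List (Module.End ℂ (EuclideanSpace ℂ (G.X (n+1)))))
    (hsa : ∀ f ∈ L, LinearMap.adjoint f = f) (hc : L.Pairwise Commute) :
    LinearMap.adjoint L.prod = L.prod := by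
  induction L with
  | nil => simpa using adjoint_one G n
  | cons a t ih =>
    rw [List.prod_cons]
    have hca : Commute a t.prod :=
      Commute.list_prod_right _ _ fun x hx => (List.pairwise_cons.mp hc).1 x hx
    show LinearMap.adjoint (a ∘ₗ t.prod) = _
    rw [LinearMap.adjoint_comp, hsa a List.mem_cons_self,
      ih (fun f hf => hsa f (List.mem_cons_of_mem a hf)) (List.pairwise_cons.mp hc).2]
    exact hca.eq.symm

lemma Q_self_adjoint : LinearMap.adjoint (Qop G n (n+1)) = Qop G n (n+1) := by
  apply adj_list_prod
  · intro f hf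
    simp only [List.mem_map, List.mem_range] at hf
    obtain ⟨i, hi, rfl⟩ := hf
    have h1 : LinearMap.adjoint (1 - Pio G n i) =
        LinearMap.adjoint (1 : Module.End ℂ (EuclideanSpace ℂ (G.X (n+1))))
          - LinearMap.adjoint (Pio G n i) := map_sub _ _ _
    rw [h1, Pio_adjoint, adjoint_one]
  · have hp : (List.range (n+1)).Pairwise
        (fun a b => Commute (1 - Pio G n a) (1 - Pio G n b)) := by
      refine ((List.Pairwise.and_mem).mp List.pairwise_lt_range).imp ?_
      rintro a b ⟨ha, hb, -⟩
      exact factor_comm G n (by simpa using Nat.lt_succ_iff.mp (List.mem_range.mp ha))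
        (Nat.lt_succ_iff.mp (List.mem_range.mp hb))
    exact List.Pairwise.map _ (fun a b h => h) hp

theorem degenerate_projector'_UNUSED :
    (∀ i j : ℕ, i ≤ n → j ≤ n → Pio G n i * Pio G n j = Pio G n j * Pio G n i) ∧
    (∀ x, degProj G n x ∈ degSpace G n) ∧
    (∀ x ∈ degSpace G n, degProj G n x = x) ∧
    (∀ x, x - degProj G n x ∈ (degSpace G n)ᗮ) := by
  have hd : ∀ x, degProj G n x = x - Qop G n (n+1) x := fun x => rfl
  refine ⟨fun i j hi hj => Pio_comm G n i j hi hj, ?_, ?_, ?_⟩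
  · intro x
    rw [hd]
    exact Q_sub_mem G n (n+1) le_rfl x
  · intro x hx
    rw [hd, LinearMap.mem_ker.mp (degSpace_le_ker G n hx), sub_zero]
  · intro x
    have hqx : x - degProj G n x = Qop G n (n+1) x := by rw [hd]; abel
    rw [hqx, Submodule.mem_orthogonal]
    intro u hu
    calc inner ℂ u (Qop G n (n+1) x)
        = (inner ℂ (LinearMap.adjoint (Qop G n (n+1)) u) x : ℂ) :=
          (LinearMap.adjoint_inner_left _ _ _).symm
      _ = 0 := by
          rw [Q_self_adjoint, LinearMap.mem_ker.mp (degSpace_le_ker G n hu), inner_zero_left]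


/-- The projectors `Π_{n,i}` commute pairwise, and
`Π_{n+1} = 1 - Π_i (1 - Π_{n,i})` is the orthogonal projector onto the degenerate
subspace `ˢH_{n+1}`: it maps into `ˢH_{n+1}`, fixes `ˢH_{n+1}` pointwise, and
`x - Π_{n+1} x` is orthogonal to `ˢH_{n+1}` for all `x`. -/
theorem degenerate_projector (G : SimplicialSet) [∀ n, Fintype (G.X n)]
    [∀ n, DecidableEq (G.X n)] (n : ℕ) :
    (∀ i j : ℕ, i ≤ n → j ≤ n → Pio G n i * Pio G n j = Pio G n j * Pio G n i) ∧
    (∀ x, degProj G n x ∈ degSpace G n) ∧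
    (∀ x ∈ degSpace G n, degProj G n x = x) ∧
    (∀ x, x - degProj G n x ∈ (degSpace G n)ᗮ) :=
  degenerate_projector'_UNUSED G n
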